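/- Consider the factorization S_n = S_{n-1} · C_n with induced actions (for x ∈ S_{n-1}, a = (1,2,...,n) generating C_n, write x·a^i = (x ▷ a^i)(x ◁ a^i) with x ▷ a^i ∈ C_n, x ◁ a^i ∈ S_{n-1}). Then the fixed subgroup (S_{n-1})^{C_n} = {x ∈ S_{n-1} : x ◁ a^i = x for all i} is isomorphic to the group of units (ℤ/nℤ)^*; in particular it has φ(n) elements. -/

import Mathlib

namespace FixedSubgroupAux

variable {n : ℕ}

/-- A permutation of `Fin (n+1)` viewed as a function on `ZMod (n+1)` (defeq types). -/
def pz (x : Equiv.Perm (Fin (n + 1))) : ZMod (n + 1) → ZMod (n + 1) := ⇑x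

lemma perm_ext {f g : Equiv.Perm (Fin (n + 1))} (h : ∀ i, pz f i = pz g i) : f = g :=
  Equiv.ext h

lemma pz_mul (f g : Equiv.Perm (Fin (n + 1))) (i : ZMod (n + 1)) :
    pz (f * g) i = pz f (pz g i) := rfl

/-- add-right translation as a permutation of `Fin (n+1)`. -/
def ar (m : ZMod (n + 1)) : Equiv.Perm (Fin (n + 1)) := Equiv.addRight m

lemma ar_pz (m : ZMod (n + 1)) (i : ZMod (n + 1)) : pz (ar m) i = i + m := rfl

lemma ar_mul (m m' : ZMod (n + 1)) : ar m * ar m' = ar (m + m') := by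
  apply perm_ext; intro i
  rw [pz_mul, ar_pz, ar_pz, ar_pz]; ring

lemma ar_one : ar (0 : ZMod (n + 1)) = 1 := by
  apply perm_ext; intro i
  rw [ar_pz]; exact add_zero i

lemma a_eq : finRotate (n + 1) = ar (1 : ZMod (n + 1)) := by
  apply perm_ext; intro i
  exact finRotate_succ_apply i

lemma ar_zpow (k : ℤ) : (finRotate (n + 1)) ^ k = ar ((k : ZMod (n + 1))) := by
  induction k using Int.induction_on with
  | zero => simpa using ar_one.symm
  | succ k ih =>
      rw [zpow_add_one, ih, a_eq, ar_mul]
      push_cast; ring_nf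
  | pred k ih =>
      rw [zpow_sub_one, ih, a_eq]
      rw [eq_comm, eq_mul_inv_iff_mul_eq, ar_mul]
      push_cast; ring_nf

lemma mem_zpowers_iff_ar (c : Equiv.Perm (Fin (n + 1))) :
    c ∈ Subgroup.zpowers (finRotate (n + 1)) ↔ ∃ m : ZMod (n + 1), c = ar m := by
  constructor
  · rintro hc
    obtain ⟨k, hk⟩ := Subgroup.mem_zpowers_iff.mp hc
    exact ⟨(k : ZMod (n + 1)), by rw [← hk, ar_zpow]⟩
  · rintro ⟨m, rfl⟩
    refine Subgroup.mem_zpowers_iff.mpr ⟨(m.val : ℤ), ?_⟩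
    rw [ar_zpow]
    congr 1
    push_cast
    exact ZMod.natCast_rightInverse (n := n + 1) m

lemma last_zmod : @Eq (ZMod (n + 1)) (Fin.last n : Fin (n + 1)) (-1) := by
  have h : (((Fin.last n : ZMod (n + 1)).val : ℕ) : ZMod (n + 1)) = (Fin.last n : ZMod (n + 1)) :=
    ZMod.natCast_rightInverse (n := n + 1) _
  have hv : (Fin.last n : ZMod (n + 1)).val = n := rfl
  rw [hv] at h
  rw [← h]
  have h2 : ((n + 1 : ℕ) : ZMod (n + 1)) = 0 := ZMod.natCast_self _
  push_cast at h2 ⊢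
  linear_combination h2

lemma pz_last (x : Equiv.Perm (Fin (n + 1))) (hx : x (Fin.last n) = Fin.last n) :
    pz x (-1) = -1 := by
  rw [← last_zmod]
  exact hx

/-- Triviality of C ∩ H. -/
lemma eq_one_of_fixes_last (c : Equiv.Perm (Fin (n + 1)))
    (hc : c ∈ Subgroup.zpowers (finRotate (n + 1))) (h : c (Fin.last n) = Fin.last n) :
    c = 1 := by
  obtain ⟨m, rfl⟩ := (mem_zpowers_iff_ar c).mp hc
  have h' : pz (ar m) (-1) = -1 := pz_last _ h
  rw [ar_pz] at h'
  have hm : m = 0 := by linear_combination h'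
  rw [hm]; exact ar_one

/-- The multiplication permutation `i ↦ (i+1)*r - 1` on `ZMod (n+1)`. -/
def mpz (r : (ZMod (n + 1))ˣ) : Equiv.Perm (ZMod (n + 1)) where
  toFun i := (i + 1) * (r : ZMod (n + 1)) - 1
  invFun j := (j + 1) * ((r⁻¹ : (ZMod (n + 1))ˣ) : ZMod (n + 1)) - 1
  left_inv i := by
    have h : (r : ZMod (n + 1)) * ((r⁻¹ : (ZMod (n + 1))ˣ) : ZMod (n + 1)) = 1 := Units.mul_inv r
    linear_combination (i + 1) * h
  right_inv j := by
    have h : ((r⁻¹ : (ZMod (n + 1))ˣ) : ZMod (n + 1)) * (r : ZMod (n + 1)) = 1 := Units.inv_mul r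
    linear_combination (j + 1) * h

def mp (r : (ZMod (n + 1))ˣ) : Equiv.Perm (Fin (n + 1)) := mpz r

lemma mp_pz (r : (ZMod (n + 1))ˣ) (i : ZMod (n + 1)) :
    pz (mp r) i = (i + 1) * (r : ZMod (n + 1)) - 1 := rfl

lemma mp_last (r : (ZMod (n + 1))ˣ) : (mp r) (Fin.last n) = Fin.last n := by
  have h : pz (mp r) (-1) = -1 := by
    rw [mp_pz]; ring
  rw [← last_zmod] at h
  exact h

lemma mp_mul (r s : (ZMod (n + 1))ˣ) : mp (r * s) = mp r * mp s := by
  apply perm_ext; intro i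
  rw [pz_mul, mp_pz, mp_pz, mp_pz, Units.val_mul]; ring

lemma mp_conj (r : (ZMod (n + 1))ˣ) (m : ZMod (n + 1)) :
    mp r * ar m * (mp r)⁻¹ = ar (m * (r : ZMod (n + 1))) := by
  rw [mul_inv_eq_iff_eq_mul]
  apply perm_ext; intro i
  rw [pz_mul, pz_mul, ar_pz, mp_pz, mp_pz, ar_pz]; ring

lemma mp_inj : Function.Injective (mp (n := n)) := by
  intro r s h
  have h0 : pz (mp r) 0 = pz (mp s) 0 := by rw [h]
  rw [mp_pz, mp_pz] at h0
  ext
  linear_combination h0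

lemma recover (x : Equiv.Perm (Fin (n + 1))) (hxlast : x (Fin.last n) = Fin.last n)
    (hnorm : x * finRotate (n + 1) * x⁻¹ ∈ Subgroup.zpowers (finRotate (n + 1))) :
    ∃ u : (ZMod (n + 1))ˣ, x = mp u := by
  obtain ⟨m, hm⟩ := (mem_zpowers_iff_ar _).mp hnorm
  rw [mul_inv_eq_iff_eq_mul, a_eq] at hm
  -- pointwise: pz x (i + 1) = pz x i + m
  have step : ∀ i : ZMod (n + 1), pz x (i + 1) = pz x i + m := by
    intro i
    have := congrArg (fun f => pz f i) hm
    simpa only [pz_mul, ar_pz] using this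
  have key : ∀ k : ℕ, pz x (-1 + (k : ZMod (n + 1))) = -1 + (k : ZMod (n + 1)) * m := by
    intro k
    induction k with
    | zero => simpa using pz_last x hxlast
    | succ k ih =>
        push_cast
        have : (-1 : ZMod (n + 1)) + ((k : ZMod (n + 1)) + 1) = (-1 + k) + 1 := by ring
        rw [this, step, ih]; ring
  have formula : ∀ i : ZMod (n + 1), pz x i = -1 + (i + 1) * m := by
    intro i
    have hval : (((i + 1 : ZMod (n + 1)).val : ℕ) : ZMod (n + 1)) = i + 1 :=
      ZMod.natCast_rightInverse (n := n + 1) _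
    have := key (i + 1).val
    rw [hval] at this
    have hi : (-1 : ZMod (n + 1)) + (i + 1) = i := by ring
    rwa [hi] at this
  -- m is a unit
  obtain ⟨j0, hj0⟩ := x.surjective (show Fin (n + 1) from (0 : ZMod (n + 1)))
  have hej : ∃ j : ZMod (n + 1), pz x j = 0 := ⟨j0, hj0⟩
  obtain ⟨j, hj'⟩ := hej
  rw [formula] at hj'
  have hunit : IsUnit m := IsUnit.of_mul_eq_one (a := m) (j + 1) (by linear_combination hj')
  refine ⟨hunit.unit, perm_ext fun i => ?_⟩
  rw [formula, mp_pz, IsUnit.unit_spec]; ring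

end FixedSubgroupAux


open FixedSubgroupAux in
theorem fixed_subgroup_iso_units (n : ℕ)
    (rhd : MulAction.stabilizer (Equiv.Perm (Fin (n + 1))) (Fin.last n) →
      Subgroup.zpowers (finRotate (n + 1)) →
      Subgroup.zpowers (finRotate (n + 1)))
    (lhd : MulAction.stabilizer (Equiv.Perm (Fin (n + 1))) (Fin.last n) →
      Subgroup.zpowers (finRotate (n + 1)) →
      MulAction.stabilizer (Equiv.Perm (Fin (n + 1))) (Fin.last n))
    (hfac : ∀ (x : MulAction.stabilizer (Equiv.Perm (Fin (n + 1))) (Fin.last n))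
      (c : Subgroup.zpowers (finRotate (n + 1))),
      (x : Equiv.Perm (Fin (n + 1))) * (c : Equiv.Perm (Fin (n + 1))) =
      (rhd x c : Equiv.Perm (Fin (n + 1))) * (lhd x c : Equiv.Perm (Fin (n + 1)))) :
    (∃ e : {x : MulAction.stabilizer (Equiv.Perm (Fin (n + 1))) (Fin.last n) //
        ∀ c, lhd x c = x} ≃ (ZMod (n + 1))ˣ,
      ∀ x y z : {x : MulAction.stabilizer (Equiv.Perm (Fin (n + 1))) (Fin.last n) //
        ∀ c, lhd x c = x}, (x : MulAction.stabilizer (Equiv.Perm (Fin (n + 1))) (Fin.last n)) *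
          (y : MulAction.stabilizer (Equiv.Perm (Fin (n + 1))) (Fin.last n)) = z →
        e x * e y = e z) ∧
    Nat.card {x : MulAction.stabilizer (Equiv.Perm (Fin (n + 1))) (Fin.last n) //
      ∀ c, lhd x c = x} = Nat.totient (n + 1) := by
  classical
  -- characterization of the fixed subgroup
  have char : ∀ x : MulAction.stabilizer (Equiv.Perm (Fin (n + 1))) (Fin.last n),
      (∀ c, lhd x c = x) ↔
      ∀ c : Subgroup.zpowers (finRotate (n + 1)),
        (x : Equiv.Perm (Fin (n + 1))) * (c : Equiv.Perm (Fin (n + 1))) *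
          (x : Equiv.Perm (Fin (n + 1)))⁻¹ ∈ Subgroup.zpowers (finRotate (n + 1)) := by
    intro x
    constructor
    · intro h c
      have hf := hfac x c
      rw [h c] at hf
      have heq : (x : Equiv.Perm (Fin (n + 1))) * (c : Equiv.Perm (Fin (n + 1))) *
          (x : Equiv.Perm (Fin (n + 1)))⁻¹ = (rhd x c : Equiv.Perm (Fin (n + 1))) := by
        rw [mul_inv_eq_iff_eq_mul]; exact hf
      rw [heq]
      exact (rhd x c).2
    · intro h c
      have hf := hfac x c
      -- let c' = x c x⁻¹ ∈ C
      have hc' : (x : Equiv.Perm (Fin (n + 1))) * (c : Equiv.Perm (Fin (n + 1))) *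
          (x : Equiv.Perm (Fin (n + 1)))⁻¹ ∈ Subgroup.zpowers (finRotate (n + 1)) := h c
      have hxc : (x : Equiv.Perm (Fin (n + 1))) * (c : Equiv.Perm (Fin (n + 1))) =
          ((x : Equiv.Perm (Fin (n + 1))) * (c : Equiv.Perm (Fin (n + 1))) *
            (x : Equiv.Perm (Fin (n + 1)))⁻¹) * (x : Equiv.Perm (Fin (n + 1))) := by group
      have key : ((x : Equiv.Perm (Fin (n + 1))) * (c : Equiv.Perm (Fin (n + 1))) *
            (x : Equiv.Perm (Fin (n + 1)))⁻¹)⁻¹ * (rhd x c : Equiv.Perm (Fin (n + 1))) =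
          (x : Equiv.Perm (Fin (n + 1))) * (lhd x c : Equiv.Perm (Fin (n + 1)))⁻¹ := by
        have hrhd : (rhd x c : Equiv.Perm (Fin (n + 1))) =
            (x : Equiv.Perm (Fin (n + 1))) * (c : Equiv.Perm (Fin (n + 1))) *
              (lhd x c : Equiv.Perm (Fin (n + 1)))⁻¹ := by
          rw [hf]; group
        rw [hrhd]; group
      have dmem : ((x : Equiv.Perm (Fin (n + 1))) * (c : Equiv.Perm (Fin (n + 1))) *
            (x : Equiv.Perm (Fin (n + 1)))⁻¹)⁻¹ * (rhd x c : Equiv.Perm (Fin (n + 1))) ∈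
          Subgroup.zpowers (finRotate (n + 1)) :=
        Subgroup.mul_mem _ (Subgroup.inv_mem _ hc') (rhd x c).2
      have hlhd_last : (lhd x c : Equiv.Perm (Fin (n + 1))) (Fin.last n) = Fin.last n :=
        (lhd x c).2
      have hx_last : (x : Equiv.Perm (Fin (n + 1))) (Fin.last n) = Fin.last n := x.2
      have dfix : ((x : Equiv.Perm (Fin (n + 1))) * (lhd x c : Equiv.Perm (Fin (n + 1)))⁻¹)
          (Fin.last n) = Fin.last n := by
        have hinv : ((lhd x c : Equiv.Perm (Fin (n + 1))))⁻¹ (Fin.last n) = Fin.last n := by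
          rw [Equiv.Perm.inv_eq_iff_eq]; exact hlhd_last.symm
        rw [Equiv.Perm.mul_apply, hinv, hx_last]
      have done1 : (x : Equiv.Perm (Fin (n + 1))) *
          (lhd x c : Equiv.Perm (Fin (n + 1)))⁻¹ = 1 := by
        apply eq_one_of_fixes_last _ _ dfix
        rw [← key]; exact dmem
      have : (lhd x c : Equiv.Perm (Fin (n + 1))) = (x : Equiv.Perm (Fin (n + 1))) := by
        have := mul_inv_eq_one.mp done1
        exact this.symm
      exact Subtype.ext this
  -- the map F
  have hmpH : ∀ r : (ZMod (n + 1))ˣ,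
      mp r ∈ MulAction.stabilizer (Equiv.Perm (Fin (n + 1))) (Fin.last n) := fun r => mp_last r
  have mp_normalizes : ∀ (r : (ZMod (n + 1))ˣ) (c : Equiv.Perm (Fin (n + 1))),
      c ∈ Subgroup.zpowers (finRotate (n + 1)) →
      mp r * c * (mp r)⁻¹ ∈ Subgroup.zpowers (finRotate (n + 1)) := by
    intro r c hc
    obtain ⟨m, rfl⟩ := (mem_zpowers_iff_ar c).mp hc
    rw [mp_conj]
    exact (mem_zpowers_iff_ar _).mpr ⟨_, rfl⟩
  let F : (ZMod (n + 1))ˣ → {x : MulAction.stabilizer (Equiv.Perm (Fin (n + 1))) (Fin.last n) //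
      ∀ c, lhd x c = x} := fun r =>
    ⟨⟨mp r, hmpH r⟩, (char _).mpr (fun c => mp_normalizes r c c.2)⟩
  have hF : Function.Bijective F := by
    constructor
    · intro r s h
      apply mp_inj
      exact congrArg (fun t => t.1.1) h
    · rintro ⟨x, hx⟩
      have hnorm := (char x).mp hx ⟨finRotate (n + 1), Subgroup.mem_zpowers _⟩
      have hx_last : (x : Equiv.Perm (Fin (n + 1))) (Fin.last n) = Fin.last n := x.2
      obtain ⟨u, hu⟩ := recover (x : Equiv.Perm (Fin (n + 1))) hx_last hnorm
      exact ⟨u, Subtype.ext (Subtype.ext hu.symm)⟩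
  have Fmul : ∀ r s : (ZMod (n + 1))ˣ, (F (r * s)).1 = (F r).1 * (F s).1 := fun r s =>
    Subtype.ext (mp_mul r s)
  refine ⟨⟨(Equiv.ofBijective F hF).symm, ?_⟩, ?_⟩
  · intro x y z hxyz
    have hx' : F ((Equiv.ofBijective F hF).symm x) = x := (Equiv.ofBijective F hF).apply_symm_apply x
    have hy' : F ((Equiv.ofBijective F hF).symm y) = y := (Equiv.ofBijective F hF).apply_symm_apply y
    have hfz : F ((Equiv.ofBijective F hF).symm x * (Equiv.ofBijective F hF).symm y) = z := by
      apply Subtype.ext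
      rw [Fmul, hx', hy', hxyz]
    calc (Equiv.ofBijective F hF).symm x * (Equiv.ofBijective F hF).symm y
        = (Equiv.ofBijective F hF).symm
            (F ((Equiv.ofBijective F hF).symm x * (Equiv.ofBijective F hF).symm y)) :=
          ((Equiv.ofBijective F hF).symm_apply_apply _).symm
      _ = (Equiv.ofBijective F hF).symm z := by rw [hfz]
  · have hcard : Nat.card {x : MulAction.stabilizer (Equiv.Perm (Fin (n + 1))) (Fin.last n) //
        ∀ c, lhd x c = x} = Nat.card (ZMod (n + 1))ˣ :=
      Nat.card_congr (Equiv.ofBijective F hF).symm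
    rw [hcard, Nat.card_eq_fintype_card, ZMod.card_units_eq_totient]
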